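/- Under the hypotheses of the Heavy Ball convergence theorem (h differentiable, L-Lipschitz gradient, strongly quasiconvex with modulus γ > 0, parameters satisfying α ∈ [0,√2/2), θ ∈ [0, α/(L√3)) with α > 0, β > θ(√2-1), θ+β ∈ (0, (1-2α²)/L]), the energy E_k := h(x_k) - h* + (α²/(θ+β))‖x_k-x_{k-1}‖² + (θ²/(θ+β))‖∇h(x_{k-1})‖² satisfies E_k ≤ σ(‖∇h(x_k)‖² + ‖x_{k+1} - x_k‖²), where σ := max{ (1/(θ+β))(3 + 12α²/(α² - 3θ²L²)), 2L/γ² + 3(θ+β) + 12α²β²/((α² - 3θ²L²)(θ+β)) } > 0. -/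

import Mathlib

open scoped RealInnerProductSpace

variable {E : Type*} [NormedAddCommGroup E] [InnerProductSpace ℝ E] [CompleteSpace E]

/-- derivative along a line -/
lemma hb_line_deriv (h : E → ℝ) (g : E → E) (hgrad : ∀ x, HasGradientAt h (g x) x)
    (y v : E) (t : ℝ) :
    HasDerivAt (fun s : ℝ => h (y + s • v)) ⟪g (y + t • v), v⟫ t := by
  have hline : HasDerivAt (fun s : ℝ => y + s • v) v t := by
    simpa using ((hasDerivAt_id t).smul_const v).const_add y
  have := (hgrad (y + t • v)).hasFDerivAt.comp_hasDerivAt t hline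
  exact this

/-- descent lemma from Lipschitz gradient -/
lemma hb_descent (h : E → ℝ) (g : E → E) (hgrad : ∀ x, HasGradientAt h (g x) x)
    (L : ℝ) (hL : 0 ≤ L) (hLip : ∀ x y, ‖g x - g y‖ ≤ L * ‖x - y‖) (y z : E) :
    h z ≤ h y + ⟪g y, z - y⟫ + L / 2 * ‖z - y‖ ^ 2 := by
  set v := z - y with hv
  set F : ℝ → ℝ := fun t => h y + t * ⟪g y, v⟫ + L * ‖v‖ ^ 2 * t ^ 2 / 2 - h (y + t • v)
    with hF
  have hder : ∀ t : ℝ, HasDerivAt F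
      (⟪g y, v⟫ + L * ‖v‖ ^ 2 * t - ⟪g (y + t • v), v⟫) t := by
    intro t
    have h1 := hb_line_deriv h g hgrad y v t
    have h2 : HasDerivAt (fun s : ℝ => h y + s * ⟪g y, v⟫ + L * ‖v‖ ^ 2 * s ^ 2 / 2)
        (⟪g y, v⟫ + L * ‖v‖ ^ 2 * t) t := by
      have ha : HasDerivAt (fun s : ℝ => s * ⟪g y, v⟫) ⟪g y, v⟫ t := by
        simpa using (hasDerivAt_id t).mul_const ⟪g y, v⟫
      have hb : HasDerivAt (fun s : ℝ => L * ‖v‖ ^ 2 * s ^ 2 / 2)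
          (L * ‖v‖ ^ 2 * (2 * t) / 2) t := by
        simpa using ((hasDerivAt_pow 2 t).const_mul (L * ‖v‖ ^ 2)).div_const 2
      have := (ha.const_add (h y)).add hb
      convert this using 1
      · rfl
      · rfl
      · rfl
      ring
    exact h2.sub h1
  have hmono : MonotoneOn F (Set.Icc (0:ℝ) 1) := by
    apply monotoneOn_of_deriv_nonneg (convex_Icc 0 1)
    · exact Continuous.continuousOn (by
        apply continuous_iff_continuousAt.2
        intro t
        exact (hder t).differentiableAt.continuousAt)
    · intro t ht
      exact (hder t).differentiableAt.differentiableWithinAt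
    · intro t ht
      rw [interior_Icc] at ht
      rw [(hder t).deriv]
      have hinner : ⟪g (y + t • v) - g y, v⟫ ≤ ‖g (y + t • v) - g y‖ * ‖v‖ :=
        real_inner_le_norm _ _
      have hlip2 : ‖g (y + t • v) - g y‖ ≤ L * (t * ‖v‖) := by
        have := hLip (y + t • v) y
        simpa [norm_smul, abs_of_pos ht.1] using this
      have hsub : ⟪g (y + t • v) - g y, v⟫ = ⟪g (y + t • v), v⟫ - ⟪g y, v⟫ :=
        inner_sub_left _ _ _
      nlinarith [norm_nonneg v, mul_le_mul_of_nonneg_right hlip2 (norm_nonneg v)]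
  have h01 := hmono (Set.left_mem_Icc.2 zero_le_one) (Set.right_mem_Icc.2 zero_le_one)
    zero_le_one
  have hF0 : F 0 = 0 := by simp [hF]
  have hF1 : F 1 = h y + ⟪g y, v⟫ + L * ‖v‖ ^ 2 / 2 - h z := by
    simp [hF, hv]
  rw [hF0, hF1] at h01
  linarith

/-- first-order consequence of strong quasiconvexity at the minimizer -/
lemma hb_sq_grad (h : E → ℝ) (g : E → E) (hgrad : ∀ x, HasGradientAt h (g x) x)
    (γ : ℝ)
    (hsq : ∀ x y : E, ∀ lam : ℝ, lam ∈ Set.Icc (0:ℝ) 1 →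
      h (lam • y + (1 - lam) • x) ≤
        max (h y) (h x) - lam * (1 - lam) * (γ / 2) * ‖x - y‖ ^ 2)
    (xbar : E) (hmin : ∀ x, h xbar ≤ h x) (y : E) :
    γ / 2 * ‖y - xbar‖ ^ 2 ≤ ⟪g y, y - xbar⟫ := by
  set v := xbar - y with hv
  set c : ℝ := γ / 2 * ‖y - xbar‖ ^ 2 with hc
  set φ : ℝ → ℝ := fun t => h (y + t • v) with hφ
  have hd : HasDerivAt φ ⟪g y, v⟫ 0 := by
    simpa using hb_line_deriv h g hgrad y v 0
  have hslope : Filter.Tendsto (slope φ 0) (nhdsWithin 0 (Set.Ioi (0:ℝ)))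
      (nhds ⟪g y, v⟫) := by
    have := hasDerivAt_iff_tendsto_slope.1 hd
    exact this.mono_left (nhdsWithin_mono 0 (fun t ht => ne_of_gt ht))
  have hlim2 : Filter.Tendsto (fun t : ℝ => -(1 - t) * c) (nhdsWithin 0 (Set.Ioi (0:ℝ)))
      (nhds (-c)) := by
    have hcont : Continuous fun t : ℝ => -(1 - t) * c := by continuity
    have := (hcont.tendsto 0).mono_left (nhdsWithin_le_nhds (s := Set.Ioi (0:ℝ)))
    simpa using this
  have hev : ∀ᶠ t in nhdsWithin 0 (Set.Ioi (0:ℝ)), slope φ 0 t ≤ -(1 - t) * c := by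
    have hIio : Set.Iio (1:ℝ) ∈ nhdsWithin 0 (Set.Ioi (0:ℝ)) :=
      nhdsWithin_le_nhds (Iio_mem_nhds one_pos)
    filter_upwards [hIio, self_mem_nhdsWithin] with t ht1 ht0
    have ht0' : (0:ℝ) < t := ht0
    have hkey := hsq y xbar t ⟨le_of_lt ht0', le_of_lt ht1⟩
    have hmax : max (h xbar) (h y) = h y := max_eq_right (hmin y)
    have hpt : t • xbar + (1 - t) • y = y + t • v := by
      rw [hv]; module
    rw [hmax, hpt] at hkey
    have hφt : φ t - φ 0 ≤ -(t * (1 - t) * c) := by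
      simp only [hφ, hc]
      simp only [zero_smul, add_zero]
      nlinarith [hkey]
    have hsl : slope φ 0 t = (φ t - φ 0) / t := by
      simp [slope_def_field]
    rw [hsl, div_le_iff₀ ht0']
    nlinarith [hφt]
  have hle : ⟪g y, v⟫ ≤ -c := le_of_tendsto_of_tendsto hslope hlim2 hev
  have : ⟪g y, y - xbar⟫ = -⟪g y, v⟫ := by
    rw [hv, show y - xbar = -(xbar - y) by abel, inner_neg_right]
  rw [this]
  linarith

set_option maxHeartbeats 1000000 in
theorem heavy_ball_hessian_energy_upper_bound
    {n : ℕ} (h : EuclideanSpace ℝ (Fin n) → ℝ)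
    (g : EuclideanSpace ℝ (Fin n) → EuclideanSpace ℝ (Fin n))
    (hgrad : ∀ x, HasGradientAt h (g x) x)
    (L : ℝ) (hL : 0 < L) (hLip : ∀ x y, ‖g x - g y‖ ≤ L * ‖x - y‖)
    (γ : ℝ) (hγ : 0 < γ)
    (hsq : ∀ x y : EuclideanSpace ℝ (Fin n), ∀ lam : ℝ, lam ∈ Set.Icc (0:ℝ) 1 →
      h (lam • y + (1 - lam) • x) ≤
        max (h y) (h x) - lam * (1 - lam) * (γ / 2) * ‖x - y‖ ^ 2)
    (xbar : EuclideanSpace ℝ (Fin n)) (hmin : ∀ x, h xbar ≤ h x)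
    (hstar : ℝ) (hstar_def : hstar = h xbar)
    (α θ β : ℝ)
    (hα0 : 0 < α) (hα' : α < Real.sqrt 2 / 2)
    (hθ : 0 ≤ θ) (hθ' : θ < α / (L * Real.sqrt 3))
    (hβ : θ * (Real.sqrt 2 - 1) < β)
    (hθβ : 0 < θ + β) (hθβ' : θ + β ≤ (1 - 2 * α ^ 2) / L)
    (x : ℕ → EuclideanSpace ℝ (Fin n))
    (hiter : ∀ k, x (k + 2) - x (k + 1) =
      α • (x (k + 1) - x k) - (θ + β) • g (x (k + 1)) + θ • g (x k))
    (E : ℕ → ℝ)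
    (hE : ∀ k, E k = h (x (k + 1)) - hstar
        + (α ^ 2 / (θ + β)) * ‖x (k + 1) - x k‖ ^ 2
        + (θ ^ 2 / (θ + β)) * ‖g (x k)‖ ^ 2)
    (σ : ℝ)
    (hσ : σ = max ((1 / (θ + β)) * (3 + 12 * α ^ 2 / (α ^ 2 - 3 * θ ^ 2 * L ^ 2)))
        (2 * L / γ ^ 2 + 3 * (θ + β)
          + 12 * α ^ 2 * β ^ 2 / ((α ^ 2 - 3 * θ ^ 2 * L ^ 2) * (θ + β)))) :
    0 < σ ∧ ∀ k, E k ≤ σ * (‖g (x (k + 1))‖ ^ 2 + ‖x (k + 2) - x (k + 1)‖ ^ 2) := by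
  have hsqrt3 : Real.sqrt 3 ^ 2 = 3 := Real.sq_sqrt (by norm_num)
  have hδ : 0 < α ^ 2 - 3 * θ ^ 2 * L ^ 2 := by
    have hpos : 0 < L * Real.sqrt 3 := by positivity
    have h1 : θ * (L * Real.sqrt 3) < α := (lt_div_iff₀ hpos).1 hθ'
    have h0 : 0 ≤ θ * (L * Real.sqrt 3) := by positivity
    nlinarith [h1, h0, hsqrt3]
  set δ := α ^ 2 - 3 * θ ^ 2 * L ^ 2 with hδdef
  set D := θ + β with hDdef
  clear_value δ D
  have hγ2 : (0:ℝ) < γ ^ 2 := by positivity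
  have hδD : 0 < δ * D := mul_pos hδ hθβ
  -- gradient vanishes at the minimizer
  have hgxbar : g xbar = 0 := by
    have hloc : IsLocalMin h xbar := Filter.Eventually.of_forall hmin
    have hz := hloc.hasFDerivAt_eq_zero (hgrad xbar).hasFDerivAt
    have h2 : (InnerProductSpace.toDual ℝ (EuclideanSpace ℝ (Fin n))) (g xbar)
        = (InnerProductSpace.toDual ℝ (EuclideanSpace ℝ (Fin n))) 0 := by
      rw [hz, map_zero]
    exact (InnerProductSpace.toDual ℝ (EuclideanSpace ℝ (Fin n))).injective h2
  -- PL-type inequality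
  have hPL : ∀ y, h y - hstar ≤ 2 * L / γ ^ 2 * ‖g y‖ ^ 2 := by
    intro y
    have hd := hb_descent h g hgrad L hL.le hLip xbar y
    rw [hgxbar, inner_zero_left] at hd
    have hq := hb_sq_grad h g hgrad γ hsq xbar hmin y
    have hcs : ⟪g y, y - xbar⟫ ≤ ‖g y‖ * ‖y - xbar‖ := real_inner_le_norm _ _
    set r := ‖y - xbar‖ with hr
    set G := ‖g y‖ with hG
    clear_value r G
    have hGnn : 0 ≤ G := hG ▸ norm_nonneg _
    have hrnn : 0 ≤ r := hr ▸ norm_nonneg _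
    have hrG : γ * r ≤ 2 * G := by
      rcases eq_or_lt_of_le hrnn with h0 | h0
      · rw [← h0, mul_zero]; linarith [hGnn]
      · have hgr : γ / 2 * r ^ 2 ≤ G * r := le_trans hq hcs
        nlinarith [hgr, h0]
    have hsq2 : γ ^ 2 * r ^ 2 ≤ 4 * G ^ 2 := by nlinarith [hrG, hrnn, hGnn, hγ]
    rw [hstar_def, div_mul_eq_mul_div, le_div_iff₀ hγ2]
    nlinarith [mul_le_mul_of_nonneg_left hsq2 (by linarith : (0:ℝ) ≤ L / 2),
      mul_le_mul_of_nonneg_right (by linarith [hd] : h y - h xbar ≤ L / 2 * r ^ 2) hγ2.le]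
  -- positivity of σ
  have hc1pos : 0 < 2 * L / γ ^ 2 + 3 * D + 12 * α ^ 2 * β ^ 2 / (δ * D) := by
    have t1 : 0 < 2 * L / γ ^ 2 := by positivity
    have t2 : 0 ≤ 12 * α ^ 2 * β ^ 2 / (δ * D) :=
      div_nonneg (by positivity) hδD.le
    nlinarith [hθβ]
  constructor
  · rw [hσ]
    exact lt_of_lt_of_le hc1pos (le_max_right _ _)
  intro k
  have hEk := hE k
  have hiterk := hiter k
  -- squared triangle inequality for three vectors
  have tri : ∀ u w z : EuclideanSpace ℝ (Fin n),
      ‖u + w + z‖ ^ 2 ≤ 3 * (‖u‖ ^ 2 + ‖w‖ ^ 2 + ‖z‖ ^ 2) := by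
    intro u w z
    have t1 := norm_add_le (u + w) z
    have t2 := norm_add_le u w
    nlinarith [norm_nonneg u, norm_nonneg w, norm_nonneg z, norm_nonneg (u + w),
      norm_nonneg (u + w + z), sq_nonneg (‖u‖ - ‖w‖), sq_nonneg (‖u‖ - ‖z‖),
      sq_nonneg (‖w‖ - ‖z‖)]
  -- first vector identity
  have hid1 : α • (x (k + 1) - x k) = (x (k + 2) - x (k + 1)) + β • g (x (k + 1))
      + θ • (g (x (k + 1)) - g (x k)) := by
    rw [hiterk, hDdef]; module
  have ht1 := tri (x (k + 2) - x (k + 1)) (β • g (x (k + 1)))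
    (θ • (g (x (k + 1)) - g (x k)))
  rw [← hid1] at ht1
  simp only [norm_smul, Real.norm_eq_abs, mul_pow, sq_abs] at ht1
  -- second vector identity
  have hid2 : θ • g (x k) = (x (k + 2) - x (k + 1)) - α • (x (k + 1) - x k)
      + D • g (x (k + 1)) := by
    rw [hiterk]; module
  have ht2 := tri (x (k + 2) - x (k + 1)) (-(α • (x (k + 1) - x k))) (D • g (x (k + 1)))
  have hre : (x (k + 2) - x (k + 1)) + -(α • (x (k + 1) - x k)) + D • g (x (k + 1))
      = θ • g (x k) := by rw [hid2]; module
  rw [hre] at ht2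
  simp only [norm_neg, norm_smul, Real.norm_eq_abs, mul_pow, sq_abs] at ht2
  -- abbreviations
  have hlipk := hLip (x (k + 1)) (x k)
  set dd := ‖x (k + 2) - x (k + 1)‖ with hdd
  set a := ‖x (k + 1) - x k‖ with ha
  set b := ‖g (x (k + 1))‖ with hb
  set e := ‖g (x k)‖ with he
  set q := ‖g (x (k + 1)) - g (x k)‖ with hq
  have hqnn : 0 ≤ q := hq ▸ norm_nonneg _
  have hann : 0 ≤ a := ha ▸ norm_nonneg _
  have hbnn : 0 ≤ b := hb ▸ norm_nonneg _
  have hddnn : 0 ≤ dd := hdd ▸ norm_nonneg _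
  have henn : 0 ≤ e := he ▸ norm_nonneg _
  clear_value dd a b e q
  have hq2 : q ^ 2 ≤ L ^ 2 * a ^ 2 := by nlinarith [hlipk, hqnn, hann, hL]
  have h1 : δ * a ^ 2 ≤ 3 * dd ^ 2 + 3 * β ^ 2 * b ^ 2 := by
    rw [hδdef]
    nlinarith [ht1, hq2, sq_nonneg θ, mul_le_mul_of_nonneg_left hq2 (sq_nonneg θ)]
  have h2 : θ ^ 2 * e ^ 2 ≤ 3 * dd ^ 2 + 3 * α ^ 2 * a ^ 2 + 3 * D ^ 2 * b ^ 2 := by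
    linarith [ht2]
  have h3 : h (x (k + 1)) - hstar ≤ 2 * L / γ ^ 2 * b ^ 2 := hb ▸ hPL (x (k + 1))
  have goal2 : δ * (α ^ 2 * a ^ 2 + θ ^ 2 * e ^ 2) ≤
      (3 * δ + 12 * α ^ 2) * dd ^ 2 + (3 * D ^ 2 * δ + 12 * α ^ 2 * β ^ 2) * b ^ 2 := by
    linarith [mul_le_mul_of_nonneg_left h2 hδ.le,
      mul_le_mul_of_nonneg_left h1 (by positivity : (0:ℝ) ≤ 4 * α ^ 2)]
  have hT : α ^ 2 / D * a ^ 2 + θ ^ 2 / D * e ^ 2 ≤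
      (3 * D + 12 * α ^ 2 * β ^ 2 / (δ * D)) * b ^ 2
      + (1 / D * (3 + 12 * α ^ 2 / δ)) * dd ^ 2 := by
    rw [show α ^ 2 / D * a ^ 2 + θ ^ 2 / D * e ^ 2
        = (δ * (α ^ 2 * a ^ 2 + θ ^ 2 * e ^ 2)) / (δ * D) by
      field_simp]
    rw [show (3 * D + 12 * α ^ 2 * β ^ 2 / (δ * D)) * b ^ 2
        + (1 / D * (3 + 12 * α ^ 2 / δ)) * dd ^ 2
        = ((3 * δ + 12 * α ^ 2) * dd ^ 2 + (3 * D ^ 2 * δ + 12 * α ^ 2 * β ^ 2) * b ^ 2)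
          / (δ * D) by
      field_simp; ring]
    exact div_le_div_of_nonneg_right goal2 hδD.le
  have key : E k ≤ (2 * L / γ ^ 2 + 3 * D + 12 * α ^ 2 * β ^ 2 / (δ * D)) * b ^ 2
      + (1 / D * (3 + 12 * α ^ 2 / δ)) * dd ^ 2 := by
    rw [hEk]
    linarith [h3, hT]
  have hσ1 : 1 / D * (3 + 12 * α ^ 2 / δ) ≤ σ := by
    rw [hσ]; exact le_max_left _ _
  have hσ2 : 2 * L / γ ^ 2 + 3 * D + 12 * α ^ 2 * β ^ 2 / (δ * D) ≤ σ := by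
    rw [hσ]; exact le_max_right _ _
  linarith [key, mul_le_mul_of_nonneg_right hσ1 (sq_nonneg dd),
    mul_le_mul_of_nonneg_right hσ2 (sq_nonneg b)]
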